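/- GNS construction (uniqueness). Let 𝔄 be a unital *-algebra and ω : 𝔄 → ℂ a positive linear functional with ω(1) ≠ 0. If (H, D, π, ψ) and (H', D', π', ψ') are two GNS quadruples for (𝔄, ω), then there exists a surjective linear isometry U : H → H' such that U(D) = D', Uψ = ψ', and π'(a)(Ux) = U(π(a)x) for every a ∈ 𝔄 and every x ∈ D. -/

import Mathlib

open scoped ComplexOrder

/-- `(H, D, π, ψ)` is a GNS quadruple for `(𝔄, ω)`:  `D` is dense in `H`, `π` is a unital
`ℂ`-algebra representation of `𝔄` on `D` with `⟪π(a*)x, y⟫ = ⟪x, π(a)y⟫`, `ψ` is cyclic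
(`D = π(𝔄)ψ`) and `ω a = ⟪ψ, π(a)ψ⟫`. -/
def IsGNSQuadruple {A : Type*} [Ring A] [Algebra ℂ A] [StarRing A] [StarModule ℂ A]
    (ω : A →ₗ[ℂ] ℂ)
    {H : Type*} [NormedAddCommGroup H] [InnerProductSpace ℂ H] [CompleteSpace H]
    (D : Submodule ℂ H) (π : A →ₐ[ℂ] Module.End ℂ D) (ψ : D) : Prop :=
  Dense (D : Set H) ∧
  (∀ (a : A) (x y : D),
    (inner ℂ (((π (star a)) x : D) : H) ((y : D) : H) : ℂ)
      = inner ℂ ((x : D) : H) (((π a) y : D) : H)) ∧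
  (∀ x : D, ∃ b : A, (π b) ψ = x) ∧
  (∀ a : A, ω a = inner ℂ ((ψ : D) : H) (((π a) ψ : D) : H))

/-- **GNS construction (uniqueness).** Two GNS quadruples for the same `(𝔄, ω)` are related by
a surjective linear isometry `U : H → H'` with `U(D) = D'`, `Uψ = ψ'` and
`π'(a) ∘ U = U ∘ π(a)` on `D`. -/
theorem gns_uniqueness {A : Type*} [Ring A] [Algebra ℂ A] [StarRing A] [StarModule ℂ A]
    (ω : A →ₗ[ℂ] ℂ) (hpos : ∀ a : A, 0 ≤ ω (star a * a)) (hone : ω 1 ≠ 0)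
    {H : Type*} [NormedAddCommGroup H] [InnerProductSpace ℂ H] [CompleteSpace H]
    {H' : Type*} [NormedAddCommGroup H'] [InnerProductSpace ℂ H'] [CompleteSpace H']
    (D : Submodule ℂ H) (π : A →ₐ[ℂ] Module.End ℂ D) (ψ : D)
    (D' : Submodule ℂ H') (π' : A →ₐ[ℂ] Module.End ℂ D') (ψ' : D')
    (hGNS : IsGNSQuadruple ω D π ψ) (hGNS' : IsGNSQuadruple ω D' π' ψ') :
    ∃ U : H →ₗᵢ[ℂ] H',
      Function.Surjective U ∧
      D.map U.toLinearMap = D' ∧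
      U ((ψ : D) : H) = ((ψ' : D') : H') ∧
      ∀ (a : A) (x : D) (hUx : U ((x : D) : H) ∈ D'),
        (((π' a) ⟨U ((x : D) : H), hUx⟩ : D') : H') = U (((π a) x : D) : H) := by
  classical
  obtain ⟨hdense, hadj, hcyc, hω⟩ := hGNS
  obtain ⟨hdense', hadj', hcyc', hω'⟩ := hGNS'
  -- key inner-product formulas
  have key : ∀ b c : A,
      (inner ℂ (((π b) ψ : D) : H) (((π c) ψ : D) : H) : ℂ) = ω (star b * c) := by
    intro b c
    have h1 := hadj (star b) ψ ((π c) ψ)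
    rw [star_star] at h1
    rw [h1, ← Module.End.mul_apply, ← map_mul, hω]
  have key' : ∀ b c : A,
      (inner ℂ (((π' b) ψ' : D') : H') (((π' c) ψ' : D') : H') : ℂ) = ω (star b * c) := by
    intro b c
    have h1 := hadj' (star b) ψ' ((π' c) ψ')
    rw [star_star] at h1
    rw [h1, ← Module.End.mul_apply, ← map_mul, hω']
  -- well-definedness
  have wd : ∀ b c : A, (π b) ψ = (π c) ψ → (π' b) ψ' = (π' c) ψ' := by
    intro b c h
    have hz : (π (b - c)) ψ = 0 := by
      rw [map_sub]; simp [LinearMap.sub_apply, h]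
    have hz' : (inner ℂ (((π' (b - c)) ψ' : D') : H') (((π' (b - c)) ψ' : D') : H') : ℂ) = 0 := by
      rw [key', ← key, hz]
      simp
    have : (((π' (b - c)) ψ' : D') : H') = 0 := inner_self_eq_zero.mp hz'
    have h0 : ((π' (b - c)) ψ' : D') = 0 := Subtype.ext this
    have := sub_eq_zero.mp (by rw [map_sub] at h0; simpa [LinearMap.sub_apply, sub_eq_zero] using h0)
    exact this
  -- the map f : D → D'
  set f : D → D' := fun x => (π' (Classical.choose (hcyc x))) ψ' with hf
  have fspec : ∀ (b : A), f ((π b) ψ) = (π' b) ψ' := by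
    intro b
    exact wd _ _ (Classical.choose_spec (hcyc ((π b) ψ)))
  have fadd : ∀ x y : D, f (x + y) = f x + f y := by
    intro x y
    obtain ⟨b, hb⟩ := hcyc x
    obtain ⟨c, hc⟩ := hcyc y
    have : x + y = (π (b + c)) ψ := by rw [map_add]; simp [LinearMap.add_apply, hb, hc]
    rw [this, fspec, ← hb, ← hc, fspec, fspec, map_add]
    simp [LinearMap.add_apply]
  have fsmul : ∀ (r : ℂ) (x : D), f (r • x) = r • f x := by
    intro r x
    obtain ⟨b, hb⟩ := hcyc x
    have : r • x = (π (r • b)) ψ := by rw [map_smul]; simp [LinearMap.smul_apply, hb]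
    rw [this, fspec, ← hb, fspec, map_smul]
    simp [LinearMap.smul_apply]
  have finner : ∀ x y : D,
      (inner ℂ ((f x : D') : H') ((f y : D') : H') : ℂ) = inner ℂ ((x : D) : H) ((y : D) : H) := by
    intro x y
    obtain ⟨b, hb⟩ := hcyc x
    obtain ⟨c, hc⟩ := hcyc y
    rw [← hb, ← hc, fspec, fspec, key, key']
  -- T : D →ₗ[ℂ] H'
  let T : D →ₗ[ℂ] H' :=
    { toFun := fun x => ((f x : D') : H')
      map_add' := fun x y => by
        show ((f (x + y) : D') : H') = ((f x : D') : H') + ((f y : D') : H')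
        rw [fadd]; rfl
      map_smul' := fun r x => by
        show ((f (r • x) : D') : H') = r • ((f x : D') : H')
        rw [fsmul]; rfl }
  have hTx : ∀ x : D, T x = ((f x : D') : H') := fun _ => rfl
  have Tnorm : ∀ x : D, ‖T x‖ = ‖x‖ := by
    intro x
    have h1 : (RCLike.re (inner ℂ (T x) (T x) : ℂ)) = ‖T x‖ ^ 2 := inner_self_eq_norm_sq (T x)
    have h2 : (RCLike.re (inner ℂ ((x : D) : H) ((x : D) : H) : ℂ)) = ‖((x : D) : H)‖ ^ 2 :=
      inner_self_eq_norm_sq _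
    have h3 : (inner ℂ (T x) (T x) : ℂ) = inner ℂ ((x : D) : H) ((x : D) : H) := finner x x
    have : ‖T x‖ ^ 2 = ‖((x : D) : H)‖ ^ 2 := by rw [← h1, ← h2, h3]
    have hnx : ‖x‖ = ‖((x : D) : H)‖ := rfl
    rw [hnx]
    nlinarith [norm_nonneg (T x), norm_nonneg ((x : D) : H), this]
  set Tc : D →L[ℂ] H' := T.mkContinuous 1 (fun x => by rw [Tnorm]; simp) with hTc
  have hTcx : ∀ x : D, Tc x = ((f x : D') : H') := fun x => rfl
  -- extension
  set e : D →L[ℂ] H := D.subtypeL with he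
  have hedense : DenseRange ⇑e := by
    have : Set.range ⇑e = (D : Set H) := Subtype.range_coe
    rw [DenseRange, this]; exact hdense
  have heiso : Isometry ⇑e := fun x y => rfl
  set U₀ : H →L[ℂ] H' := Tc.extend e with hU₀
  have hUeq : ∀ x : D, U₀ ((x : D) : H) = ((f x : D') : H') := fun x =>
    Tc.extend_eq hedense heiso.isUniformInducing x
  have hUnorm : ∀ z : H, ‖U₀ z‖ = ‖z‖ := by
    have := Continuous.ext_on hdense (by fun_prop : Continuous fun z : H => ‖U₀ z‖)
      (by fun_prop : Continuous fun z : H => ‖z‖) ?_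
    · exact fun z => congrFun this z
    · rintro z hz
      have : U₀ z = ((f ⟨z, hz⟩ : D') : H') := hUeq ⟨z, hz⟩
      simp only [this]
      rw [show ‖((f ⟨z, hz⟩ : D') : H')‖ = ‖T ⟨z, hz⟩‖ from rfl, Tnorm]
      rfl
  set U : H →ₗᵢ[ℂ] H' := ⟨U₀.toLinearMap, hUnorm⟩ with hU
  have hUx : ∀ x : D, U ((x : D) : H) = ((f x : D') : H') := hUeq
  refine ⟨U, ?_, ?_, ?_, ?_⟩
  · -- surjectivity
    have hclosed : IsClosed (Set.range ⇑U) := U.isometry.isClosedEmbedding.isClosed_range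
    have hsub : (D' : Set H') ⊆ Set.range ⇑U := by
      rintro y hy
      obtain ⟨b, hb⟩ := hcyc' ⟨y, hy⟩
      refine ⟨(((π b) ψ : D) : H), ?_⟩
      rw [hUx, fspec, hb]
    have : Dense (Set.range ⇑U) := hdense'.mono hsub
    have hru : Set.range ⇑U = Set.univ := by
      rw [← hclosed.closure_eq]; exact this.closure_eq
    exact Set.range_eq_univ.mp hru
  · -- D.map U = D'
    apply le_antisymm
    · rintro y ⟨x, hx, rfl⟩
      have : U.toLinearMap x = ((f ⟨x, hx⟩ : D') : H') := hUx ⟨x, hx⟩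
      rw [this]; exact (f ⟨x, hx⟩).2
    · intro y hy
      obtain ⟨b, hb⟩ := hcyc' ⟨y, hy⟩
      refine ⟨(((π b) ψ : D) : H), ((π b) ψ).2, ?_⟩
      show U _ = y
      rw [hUx, fspec, hb]
  · -- U ψ = ψ'
    have h1 : ψ = (π 1) ψ := by rw [map_one]; rfl
    rw [h1, hUx, fspec, map_one]; rfl
  · -- intertwining
    intro a x hx
    obtain ⟨b, hb⟩ := hcyc x
    have h1 : U ((x : D) : H) = (((π' b) ψ' : D') : H') := by rw [hUx, ← hb, fspec]
    have h2 : (⟨U ((x : D) : H), hx⟩ : D') = (π' b) ψ' := Subtype.ext h1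
    rw [h2]
    have h3 : (π' a) ((π' b) ψ') = (π' (a * b)) ψ' := by
      rw [map_mul]; rfl
    have h4 : (π a) x = (π (a * b)) ψ := by rw [← hb, map_mul]; rfl
    rw [h3, h4, hUx, fspec]
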